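/- arXiv:2201.07380 — 7 statements merged into one kernel-verified Lean document; each statement's English description precedes it below -/
import Mathlib

section
/- Let m ∈ (0,1) and let D be a nonempty harmonically m-convex set of positive real numbers. Then D is starshaped in the sense that for every x ∈ D and every t ∈ (0,1], the point t*x belongs to D. -/
/-- A set `D` of reals is harmonically `m`-convex if for all `x, y ∈ D` and
`t ∈ [0,1]`, the harmonic `m`-combination `m*x*y/(t*m*x + (1-t)*y)` lies in `D`. -/
def HarmMConvexSet (m : ℝ) (D : Set ℝ) : Prop :=
  ∀ x ∈ D, ∀ y ∈ D, ∀ t ∈ Set.Icc (0:ℝ) 1,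
    m * x * y / (t * m * x + (1 - t) * y) ∈ D

lemma harm_step (m : ℝ) (hm : m ∈ Set.Ioo (0:ℝ) 1) (D : Set ℝ)
    (hDpos : ∀ x ∈ D, 0 < x) (hD : HarmMConvexSet m D) :
    ∀ x ∈ D, ∀ c : ℝ, m ≤ c → c ≤ 1 → c * x ∈ D := by
  obtain ⟨hm0, hm1⟩ := hm
  intro x hx c hc1 hc2
  have hx0 := hDpos x hx
  have hc0 : 0 < c := lt_of_lt_of_le hm0 hc1
  set s : ℝ := (c - m) / (c * (1 - m)) with hs
  have hden : 0 < c * (1 - m) := by nlinarith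
  have hs0 : 0 ≤ s := div_nonneg (by linarith) hden.le
  have hs1 : s ≤ 1 := by
    rw [hs, div_le_one hden]; nlinarith
  have h := hD x hx x hx s ⟨hs0, hs1⟩
  have key : m * x * x / (s * m * x + (1 - s) * x) = c * x := by
    have hsm : s * m * x + (1 - s) * x = (m / c) * x := by
      rw [hs]; field_simp; ring
    rw [hsm]
    field_simp
  rwa [key] at h

theorem stmt_0 (m : ℝ) (hm : m ∈ Set.Ioo (0:ℝ) 1) (D : Set ℝ)
    (hDne : D.Nonempty) (hDpos : ∀ x ∈ D, 0 < x)
    (hD : HarmMConvexSet m D) :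
    ∀ x ∈ D, ∀ t ∈ Set.Ioc (0:ℝ) 1, t * x ∈ D := by
  obtain ⟨hm0, hm1⟩ := hm
  have step := harm_step m ⟨hm0, hm1⟩ D hDpos hD
  have main : ∀ n : ℕ, ∀ t : ℝ, m ^ n ≤ t → t ≤ 1 → ∀ x ∈ D, t * x ∈ D := by
    intro n
    induction n with
    | zero =>
      intro t h1 h2 x hx
      simp only [pow_zero] at h1
      have : t = 1 := le_antisymm h2 h1
      rw [this, one_mul]; exact hx
    | succ n ih =>
      intro t h1 h2 x hx
      by_cases hcm : m ≤ t
      · exact step x hx t hcm h2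
      · push_neg at hcm
        have htm : t / m ≤ 1 := by
          rw [div_le_one hm0]; linarith
        have htm' : m ^ n ≤ t / m := by
          rw [le_div_iff₀ hm0]
          calc m ^ n * m = m ^ (n + 1) := by ring
            _ ≤ t := h1
        have h' := ih (t / m) htm' htm x hx
        have := step _ h' m le_rfl hm1.le
        have heq : m * (t / m * x) = t * x := by
          field_simp
        rwa [heq] at this
  intro x hx t ht
  obtain ⟨n, hn⟩ := exists_pow_lt_of_lt_one ht.1 hm1
  exact main n t hn.le ht.2 x hx
end

section
/- Let Y be a real vector space, m ∈ (0,1], D a harmonically m-convex set of positive reals, and F : D → (nonempty subsets of Y) a harmonically m-convex set-valued function. If A ⊆ D is a harmonically m-convex set, then the image F(A) = ⋃_{z ∈ A} F(z) is an m-convex subset of Y. -/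
open Pointwise

/-- A set-valued function `F` on `D` is harmonically `m`-convex. -/
def SVHarmMConvex {Y : Type*} [AddCommGroup Y] [Module ℝ Y]
    (m : ℝ) (D : Set ℝ) (F : ℝ → Set Y) : Prop :=
  ∀ x ∈ D, ∀ y ∈ D, ∀ t ∈ Set.Icc (0:ℝ) 1,
    t • F y + (m * (1 - t)) • F x ⊆ F (m * x * y / (t * m * x + (1 - t) * y))


/-- A subset `S` of a real vector space is `m`-convex. -/
def MConvexSet {Y : Type*} [AddCommGroup Y] [Module ℝ Y] (m : ℝ) (S : Set Y) : Prop :=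
  ∀ a ∈ S, ∀ b ∈ S, ∀ t ∈ Set.Icc (0:ℝ) 1, t • b + (m * (1 - t)) • a ∈ S

theorem stmt_2 {Y : Type*} [AddCommGroup Y] [Module ℝ Y]
    (m : ℝ) (hm : m ∈ Set.Ioc (0:ℝ) 1) (D : Set ℝ)
    (hDpos : ∀ x ∈ D, 0 < x) (hD : HarmMConvexSet m D)
    (F : ℝ → Set Y) (hFne : ∀ x ∈ D, (F x).Nonempty)
    (hF : SVHarmMConvex m D F)
    (A : Set ℝ) (hAD : A ⊆ D) (hA : HarmMConvexSet m A) :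
    MConvexSet m (⋃ z ∈ A, F z) := by
  intro a ha b hb t ht
  simp only [Set.mem_iUnion] at ha hb ⊢
  obtain ⟨x, hxA, hax⟩ := ha
  obtain ⟨y, hyA, hby⟩ := hb
  refine ⟨_, hA x hxA y hyA t ht, ?_⟩
  exact hF x (hAD hxA) y (hAD hyA) t ht
    (Set.add_mem_add (Set.smul_mem_smul_set hby) (Set.smul_mem_smul_set hax))
end

section
/- Let Y be a real vector space, m ∈ (0,1], D a harmonically m-convex set of positive reals, and F : D → (nonempty subsets of Y) a harmonically m-convex set-valued function. Then the range of F, namely F(D) = ⋃_{z ∈ D} F(z), is an m-convex subset of Y. -/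
open Pointwise

theorem stmt_3 {Y : Type*} [AddCommGroup Y] [Module ℝ Y]
    (m : ℝ) (hm : m ∈ Set.Ioc (0:ℝ) 1) (D : Set ℝ)
    (hDpos : ∀ x ∈ D, 0 < x) (hD : HarmMConvexSet m D)
    (F : ℝ → Set Y) (hFne : ∀ x ∈ D, (F x).Nonempty)
    (hF : SVHarmMConvex m D F) :
    MConvexSet m (⋃ z ∈ D, F z) := by
  intro a ha b hb t ht
  simp only [Set.mem_iUnion] at ha hb ⊢
  obtain ⟨x, hx, hax⟩ := ha
  obtain ⟨y, hy, hby⟩ := hb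
  exact ⟨_, hD x hx y hy t ht, hF x hx y hy t ht ⟨t • b, ⟨b, hby, rfl⟩,
    (m * (1 - t)) • a, ⟨a, hax, rfl⟩, rfl⟩⟩
end

section
/- Let Y be a real vector space, m ∈ (0,1], and D a harmonically m-convex set of positive reals. A set-valued function F : D → (nonempty subsets of Y) is harmonically m-convex if and only if for all nonempty subsets A, B ⊆ D and all t ∈ [0,1], one has t • F(B) + m*(1-t) • F(A) ⊆ F( { m*a*b/(t*m*a + (1-t)*b) : a ∈ A, b ∈ B } ), where for a set S ⊆ D we write F(S) = ⋃_{s ∈ S} F(s). -/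
open Pointwise

theorem stmt_4 {Y : Type*} [AddCommGroup Y] [Module ℝ Y]
    (m : ℝ) (hm : m ∈ Set.Ioc (0:ℝ) 1) (D : Set ℝ)
    (hDpos : ∀ x ∈ D, 0 < x) (hD : HarmMConvexSet m D)
    (F : ℝ → Set Y) (hFne : ∀ x ∈ D, (F x).Nonempty) :
    SVHarmMConvex m D F ↔
      ∀ A B : Set ℝ, A.Nonempty → B.Nonempty → A ⊆ D → B ⊆ D →
        ∀ t ∈ Set.Icc (0:ℝ) 1,
          t • (⋃ b ∈ B, F b) + (m * (1 - t)) • (⋃ a ∈ A, F a) ⊆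
            ⋃ z ∈ {z : ℝ | ∃ a ∈ A, ∃ b ∈ B,
              z = m * a * b / (t * m * a + (1 - t) * b)}, F z := by
  constructor
  · intro hF A B hAne hBne hAD hBD t ht p hp
    obtain ⟨u, hu, v, hv, rfl⟩ := hp
    obtain ⟨y', hy', rfl⟩ := hu
    obtain ⟨x', hx', rfl⟩ := hv
    simp only [Set.mem_iUnion] at hy' hx'
    obtain ⟨b, hb, hy'⟩ := hy'
    obtain ⟨a, ha, hx'⟩ := hx'
    refine Set.mem_iUnion₂.2 ⟨m * a * b / (t * m * a + (1 - t) * b), ⟨a, ha, b, hb, rfl⟩, ?_⟩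
    exact hF a (hAD ha) b (hBD hb) t ht ⟨t • y', ⟨y', hy', rfl⟩, (m * (1 - t)) • x', ⟨x', hx', rfl⟩, rfl⟩
  · intro h x hx y hy t ht p hp
    have := h {x} {y} ⟨x, rfl⟩ ⟨y, rfl⟩ (by simpa) (by simpa) t ht
      (by simpa using hp)
    simp only [Set.mem_iUnion] at this
    obtain ⟨z, ⟨a, ha, b, hb, rfl⟩, hz⟩ := this
    simp only [Set.mem_singleton_iff] at ha hb
    subst ha; subst hb
    exact hz
end

section
/- (Hermite–Hadamard inclusion, first half.) Let m ∈ (0,1], D a harmonically m-convex set of positive reals, and F : D → (nonempty subsets of ℝ) a harmonically m-convex set-valued function. Let 0 < a < b with b ∈ D and a/m ∈ D (so that the closed interval [a,b] is contained in D). Then for every u ∈ F(b) and every v ∈ F(a/m), the point (u + m*v)/2 belongs to the Aumann integral set; that is, there exists a function f : ℝ → ℝ that is integrable on [a,b], satisfies f(x) ∈ F(x) for every x ∈ [a,b], and for which (a*b/(b-a)) * ∫_a^b f(x)/x² dx = (u + m*v)/2. -/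
open Pointwise

theorem stmt_8 (m : ℝ) (hm : m ∈ Set.Ioc (0:ℝ) 1) (D : Set ℝ)
    (hDpos : ∀ x ∈ D, 0 < x) (hD : HarmMConvexSet m D)
    (F : ℝ → Set ℝ) (hFne : ∀ x ∈ D, (F x).Nonempty)
    (hF : SVHarmMConvex m D F)
    (a b : ℝ) (ha : 0 < a) (hab : a < b) (hbD : b ∈ D) (haD : a / m ∈ D)
    (hIcc : Set.Icc a b ⊆ D)
    (u v : ℝ) (hu : u ∈ F b) (hv : v ∈ F (a / m)) :
    ∃ f : ℝ → ℝ, MeasureTheory.IntegrableOn f (Set.Icc a b) ∧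
      (∀ x ∈ Set.Icc a b, f x ∈ F x) ∧
      (a * b / (b - a)) * ∫ x in a..b, f x / x ^ 2 = (u + m * v) / 2 := by
  obtain ⟨hm0, hm1⟩ := hm
  have hba : (0:ℝ) < b - a := sub_pos.2 hab
  have hb : (0:ℝ) < b := ha.trans hab
  set f : ℝ → ℝ := fun x => (b * (x - a) / (x * (b - a))) * u
      + m * (a * (b - x) / (x * (b - a))) * v with hf
  have hxne : ∀ x ∈ Set.Icc a b, x * (b - a) ≠ 0 := fun x hx =>
    ne_of_gt (mul_pos (lt_of_lt_of_le ha hx.1) hba)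
  have hcont : ContinuousOn f (Set.Icc a b) := by
    apply ContinuousOn.add
    · exact (((continuousOn_const.mul (continuousOn_id.sub continuousOn_const)).div
        (continuousOn_id.mul continuousOn_const) (hxne)).mul continuousOn_const)
    · exact ((continuousOn_const.mul ((continuousOn_const.mul
        (continuousOn_const.sub continuousOn_id)).div
        (continuousOn_id.mul continuousOn_const) (hxne))).mul continuousOn_const)
  refine ⟨f, hcont.integrableOn_Icc, ?_, ?_⟩
  · intro x hx
    obtain ⟨hax, hxb⟩ := hx
    have hx0 : (0:ℝ) < x := lt_of_lt_of_le ha hax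
    set t : ℝ := b * (x - a) / (x * (b - a)) with ht
    have ht0 : 0 ≤ t := by
      apply div_nonneg
      · exact mul_nonneg hb.le (sub_nonneg.2 hax)
      · exact (mul_pos hx0 hba).le
    have ht1 : t ≤ 1 := by
      rw [ht, div_le_one (mul_pos hx0 hba)]
      nlinarith
    have key := hF (a / m) haD b hbD t ⟨ht0, ht1⟩
    have harg : m * (a / m) * b / (t * m * (a / m) + (1 - t) * b) = x := by
      have hma : m * (a / m) = a := by field_simp
      rw [hma]
      have hden : t * a + (1 - t) * b = a * b / x := by
        rw [ht]; field_simp; ring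
      rw [show t * m * (a / m) + (1 - t) * b = t * a + (1 - t) * b by
        rw [mul_assoc, hma], hden]
      field_simp
    have hmem : t * u + m * (1 - t) * v ∈
        t • F b + (m * (1 - t)) • F (a / m) := by
      exact Set.add_mem_add (Set.smul_mem_smul_set hu) (Set.smul_mem_smul_set hv)
    have := key hmem
    rw [harg] at this
    have hfx : f x = t * u + m * (1 - t) * v := by
      rw [hf, ht]
      have h1t : 1 - b * (x - a) / (x * (b - a)) = a * (b - x) / (x * (b - a)) := by
        field_simp; ring
      simp only
      rw [h1t]
    rwa [hfx]
  · -- integral computation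
    set A : ℝ := m * v * a / (b - a) - b * u / (b - a) with hA
    set B : ℝ := (b * u / (b - a) * a - m * v * a / (b - a) * b) / 2 with hB
    set g : ℝ → ℝ := fun x => A * x⁻¹ + B * (x ^ 2)⁻¹ with hg
    have hderiv : ∀ x ∈ Set.uIcc a b, HasDerivAt g (f x / x ^ 2) x := by
      intro x hx
      rw [Set.uIcc_of_le hab.le] at hx
      have hx0 : (0:ℝ) < x := lt_of_lt_of_le ha hx.1
      have hx0' : x ≠ 0 := ne_of_gt hx0
      have h1 : HasDerivAt (fun x : ℝ => A * x⁻¹) (A * (-(x ^ 2)⁻¹)) x :=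
        (hasDerivAt_inv hx0').const_mul A
      have h2 : HasDerivAt (fun x : ℝ => B * (x ^ 2)⁻¹)
          (B * (-(↑2 * x ^ (2 - 1)) / (x ^ 2) ^ 2)) x := by
        have := ((hasDerivAt_pow 2 x).div_const 1).inv (by positivity)
        simpa using ((hasDerivAt_pow 2 x).inv (by positivity)).const_mul B
      have := h1.add h2
      refine this.congr_deriv ?_
      have hba' : b - a ≠ 0 := ne_of_gt hba
      rw [hf]
      field_simp
      rw [hA, hB]
      field_simp
      ring
    have hint : IntervalIntegrable (fun x => f x / x ^ 2) MeasureTheory.volume a b := by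
      rw [intervalIntegrable_iff_integrableOn_Icc_of_le hab.le]
      apply ContinuousOn.integrableOn_Icc
      exact hcont.div (continuousOn_pow 2) (fun x hx => by
        have := lt_of_lt_of_le ha hx.1; positivity)
    rw [intervalIntegral.integral_eq_sub_of_hasDerivAt hderiv hint]
    rw [hg, hA, hB]
    simp only
    have ha' : a ≠ 0 := ne_of_gt ha
    have hb' : b ≠ 0 := ne_of_gt hb
    have hba' : b - a ≠ 0 := ne_of_gt hba
    field_simp
    ring
end

section
/- (Hermite–Hadamard inclusion, second half.) Let m ∈ (0,1], D a harmonically m-convex set of positive reals, and F : D → (nonempty subsets of ℝ) a harmonically m-convex set-valued function. Let 0 < a < b with a ∈ D and b/m ∈ D (so that the closed interval [a,b] is contained in D). Then for every u ∈ F(a) and every v ∈ F(b/m), the point (u + m*v)/2 belongs to the Aumann integral set; that is, there exists a function f : ℝ → ℝ that is integrable on [a,b], satisfies f(x) ∈ F(x) for every x ∈ [a,b], and for which (a*b/(b-a)) * ∫_a^b f(x)/x² dx = (u + m*v)/2. -/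
open Pointwise

theorem stmt_9 (m : ℝ) (hm : m ∈ Set.Ioc (0:ℝ) 1) (D : Set ℝ)
    (hDpos : ∀ x ∈ D, 0 < x) (hD : HarmMConvexSet m D)
    (F : ℝ → Set ℝ) (hFne : ∀ x ∈ D, (F x).Nonempty)
    (hF : SVHarmMConvex m D F)
    (a b : ℝ) (ha : 0 < a) (hab : a < b) (haD : a ∈ D) (hbD : b / m ∈ D)
    (hIcc : Set.Icc a b ⊆ D)
    (u v : ℝ) (hu : u ∈ F a) (hv : v ∈ F (b / m)) :
    ∃ f : ℝ → ℝ, MeasureTheory.IntegrableOn f (Set.Icc a b) ∧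
      (∀ x ∈ Set.Icc a b, f x ∈ F x) ∧
      (a * b / (b - a)) * ∫ x in a..b, f x / x ^ 2 = (u + m * v) / 2 := by
  obtain ⟨hm0, hm1⟩ := hm
  have hb : 0 < b := ha.trans hab
  have hba : 0 < b - a := sub_pos.2 hab
  have hxne : ∀ x ∈ Set.Icc a b, x ≠ 0 := fun x hx => (lt_of_lt_of_le ha hx.1).ne'
  set f : ℝ → ℝ := fun x =>
    (a * (b - x) / (x * (b - a))) * u + (m * (b * (x - a) / (x * (b - a)))) * v with hf_def
  have hcont : ContinuousOn f (Set.Icc a b) := by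
    apply ContinuousOn.add
    · exact ((continuousOn_const.mul (continuousOn_const.sub continuousOn_id)).div
        (continuousOn_id.mul continuousOn_const)
        (fun x hx => mul_ne_zero (hxne x hx) hba.ne')).mul continuousOn_const
    · exact (continuousOn_const.mul
        ((continuousOn_const.mul (continuousOn_id.sub continuousOn_const)).div
          (continuousOn_id.mul continuousOn_const)
          (fun x hx => mul_ne_zero (hxne x hx) hba.ne'))).mul continuousOn_const
  refine ⟨f, hcont.integrableOn_Icc, ?_, ?_⟩
  · intro x hx
    obtain ⟨hax, hxb⟩ := hx
    have hx0 : (0:ℝ) < x := lt_of_lt_of_le ha hax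
    set t : ℝ := a * (b - x) / (x * (b - a)) with ht_def
    have ht : t ∈ Set.Icc (0:ℝ) 1 := by
      constructor
      · apply div_nonneg
        · nlinarith
        · positivity
      · rw [div_le_one (by positivity)]
        nlinarith
    have key := hF (b / m) hbD a haD t ht
    have hd : t * m * (b / m) + (1 - t) * a = a * b / x := by
      rw [ht_def]; field_simp; ring
    have hdne : t * m * (b / m) + (1 - t) * a ≠ 0 := by
      rw [hd]; positivity
    have harg : m * (b / m) * a / (t * m * (b / m) + (1 - t) * a) = x := by
      rw [div_eq_iff hdne, hd]
      field_simp
    have hmem : f x ∈ t • F a + (m * (1 - t)) • F (b / m) := by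
      have h1 : (1 : ℝ) - t = b * (x - a) / (x * (b - a)) := by
        rw [ht_def]; field_simp; ring
      have : f x = t * u + (m * (1 - t)) * v := by
        rw [hf_def, h1, ht_def]
      rw [this]
      exact Set.add_mem_add (Set.smul_mem_smul_set hu) (Set.smul_mem_smul_set hv)
    have := key hmem
    rwa [harg] at this
  · -- compute the integral
    set C1 : ℝ := u * a / (b - a) with hC1
    set C2 : ℝ := m * v * b / (b - a) with hC2
    set g : ℝ → ℝ := fun x => C1 * (x⁻¹ - (b / 2) * (x ^ 2)⁻¹)
      + C2 * ((a / 2) * (x ^ 2)⁻¹ - x⁻¹) with hg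
    have hderiv : ∀ x ∈ Set.uIcc a b, HasDerivAt g (f x / x ^ 2) x := by
      intro x hx
      rw [Set.uIcc_of_le hab.le] at hx
      have hx0 : x ≠ 0 := hxne x hx
      have h1 : HasDerivAt (fun y : ℝ => y⁻¹) (-(x ^ 2)⁻¹) x := by
        simpa using hasDerivAt_inv hx0
      have h2 : HasDerivAt (fun y : ℝ => (y ^ 2)⁻¹)
          (-(2 * x ^ 1) / (x ^ 2) ^ 2) x :=
        (hasDerivAt_pow 2 x).inv (pow_ne_zero 2 hx0)
      have hG : HasDerivAt g
          (C1 * (-(x ^ 2)⁻¹ - (b / 2) * (-(2 * x ^ 1) / (x ^ 2) ^ 2))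
            + C2 * ((a / 2) * (-(2 * x ^ 1) / (x ^ 2) ^ 2) - -(x ^ 2)⁻¹)) x := by
        exact ((h1.sub (h2.const_mul (b / 2))).const_mul C1).add
          (((h2.const_mul (a / 2)).sub h1).const_mul C2)
      convert hG using 1
      rw [hf_def, hC1, hC2]
      field_simp
      ring
    have hint : IntervalIntegrable (fun x => f x / x ^ 2)
        MeasureTheory.volume a b := by
      apply ContinuousOn.intervalIntegrable
      rw [Set.uIcc_of_le hab.le]
      exact hcont.div (continuousOn_pow 2) (fun x hx => pow_ne_zero 2 (hxne x hx))
    rw [intervalIntegral.integral_eq_sub_of_hasDerivAt hderiv hint]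
    rw [hg, hC1, hC2]
    field_simp
    ring
end

section
/- Let m ∈ (0,1], D a harmonically m-convex set of positive reals, and f₁, f₂ : D → ℝ functions such that f₁ is harmonically m-convex, −f₂ is harmonically m-convex, and f₁(x) ≤ f₂(x) for all x ∈ D. Then the interval-valued function F(x) = [f₁(x), f₂(x)] (the closed interval from f₁(x) to f₂(x)) is a harmonically m-convex set-valued function on D; that is, for all x, y ∈ D and t ∈ [0,1], t • F(y) + m*(1-t) • F(x) ⊆ F(m*x*y/(t*m*x + (1-t)*y)). -/
open Pointwise

theorem stmt_10 (m : ℝ) (hm : m ∈ Set.Ioc (0:ℝ) 1) (D : Set ℝ)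
    (hDpos : ∀ x ∈ D, 0 < x) (hD : HarmMConvexSet m D)
    (f₁ f₂ : ℝ → ℝ)
    (hf₁ : ∀ x ∈ D, ∀ y ∈ D, ∀ t ∈ Set.Icc (0:ℝ) 1,
      f₁ (m * x * y / (t * m * x + (1 - t) * y)) ≤ t * f₁ y + m * (1 - t) * f₁ x)
    (hf₂ : ∀ x ∈ D, ∀ y ∈ D, ∀ t ∈ Set.Icc (0:ℝ) 1,
      (-f₂) (m * x * y / (t * m * x + (1 - t) * y)) ≤ t * (-f₂) y + m * (1 - t) * (-f₂) x)
    (hle : ∀ x ∈ D, f₁ x ≤ f₂ x) :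
    SVHarmMConvex m D (fun x => Set.Icc (f₁ x) (f₂ x)) := by
  intro x hx y hy t ht z hz
  obtain ⟨p, ⟨a, ha, rfl⟩, q, ⟨b, hb, rfl⟩, rfl⟩ := hz
  simp only [smul_eq_mul]
  have ht0 := ht.1
  have ht1 := ht.2
  have hmt : 0 ≤ m * (1 - t) := mul_nonneg hm.1.le (by linarith)
  have h1 := hf₁ x hx y hy t ht
  have h2 := hf₂ x hx y hy t ht
  simp only [Pi.neg_apply] at h2
  constructor
  · have : t * f₁ y + m * (1 - t) * f₁ x ≤ t * a + m * (1 - t) * b := by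
      gcongr <;> [exact ha.1; exact hb.1]
    linarith
  · have : t * a + m * (1 - t) * b ≤ t * f₂ y + m * (1 - t) * f₂ x := by
      gcongr <;> [exact ha.2; exact hb.2]
    nlinarith [h2]
end
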